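/- Let B be a Rota–Baxter operator of weight λ on a Lie algebra g over a field. Then: (a) the semidirect bracket ⁅(x,ξ),(y,η)⁆ := (⁅x,y⁆, ad*_x η − ad*_y ξ) on g × Dual(g) is a Lie bracket; (b) B̃(x,ξ) := (Bx, −λξ − ξ∘B) is a Rota–Baxter operator of weight λ for this bracket; (c) the pairing 𝒮((x,ξ),(y,η)) := η(x) + ξ(y) is symmetric, nondegenerate and invariant, and satisfies 𝒮(B̃a,b) + 𝒮(a,B̃b) + λ𝒮(a,b) = 0 for all a,b. Hence (g ⋉_{ad*} Dual(g), B̃, 𝒮) is a quadratic Rota–Baxter Lie algebra of weight λ. -/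
import Mathlib


variable {K : Type*} [Field K] {g : Type*} [LieRing g] [LieAlgebra K g]

/-- Coadjoint action `ad*_x ξ = −ξ ∘ (ad x)` on the dual space. -/
noncomputable def coad (x : g) (ξ : Module.Dual K g) : Module.Dual K g :=
  -(ξ ∘ₗ (LieAlgebra.ad K g x : g →ₗ[K] g))

/-- The semidirect bracket `⁅(x,ξ),(y,η)⁆ = (⁅x,y⁆, ad*_x η − ad*_y ξ)` on `g × Dual g`. -/
noncomputable def sdBracket (a b : g × Module.Dual K g) : g × Module.Dual K g :=
  (⁅a.1, b.1⁆, coad a.1 b.2 - coad b.1 a.2)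

/-- The operator `B̃(x,ξ) = (Bx, −lam ξ − ξ∘B)` on `g × Dual g`. -/
noncomputable def Btilde (lam : K) (B : g →ₗ[K] g) (a : g × Module.Dual K g) :
    g × Module.Dual K g :=
  (B a.1, -(lam • a.2) - a.2 ∘ₗ B)

/-- The pairing `𝒮((x,ξ),(y,η)) = η(x) + ξ(y)` on `g × Dual g`. -/
noncomputable def Spair (a b : g × Module.Dual K g) : K :=
  b.2 a.1 + a.2 b.1

/-- For a Rota–Baxter operator `B` of weight `lam` on `g`:
(a) the semidirect bracket on `g × Dual g` is a Lie bracket; (b) `B̃` is a Rota–Baxter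
operator of weight `lam` for it; (c) the pairing `𝒮` is symmetric, nondegenerate,
invariant and compatible with `B̃`.  Hence `(g ⋉_{ad*} Dual g, B̃, 𝒮)` is a quadratic
Rota–Baxter Lie algebra of weight `lam`. -/
theorem stmt8 (lam : K) (B : g →ₗ[K] g)
    (hB : ∀ x y : g, ⁅B x, B y⁆ = B (⁅B x, y⁆ + ⁅x, B y⁆ + lam • ⁅x, y⁆)) :
    -- (a) the semidirect bracket is a Lie bracket: bilinear, alternating, Jacobi
    (∀ a b c : g × Module.Dual K g,
      sdBracket (a + b) c = sdBracket a c + sdBracket b c) ∧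
    (∀ (t : K) (a b : g × Module.Dual K g), sdBracket (t • a) b = t • sdBracket a b) ∧
    (∀ a b c : g × Module.Dual K g,
      sdBracket a (b + c) = sdBracket a b + sdBracket a c) ∧
    (∀ (t : K) (a b : g × Module.Dual K g), sdBracket a (t • b) = t • sdBracket a b) ∧
    (∀ a : g × Module.Dual K g, sdBracket a a = 0) ∧
    (∀ a b c : g × Module.Dual K g,
      sdBracket a (sdBracket b c) =
        sdBracket (sdBracket a b) c + sdBracket b (sdBracket a c)) ∧
    -- (b) `B̃` is a Rota–Baxter operator of weight `lam`
    (∀ a b : g × Module.Dual K g,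
      sdBracket (Btilde lam B a) (Btilde lam B b) =
        Btilde lam B (sdBracket (Btilde lam B a) b + sdBracket a (Btilde lam B b) +
          lam • sdBracket a b)) ∧
    -- (c) `𝒮` is symmetric, nondegenerate, invariant, compatible with `B̃`
    (∀ a b : g × Module.Dual K g, Spair a b = Spair b a) ∧
    (∀ a : g × Module.Dual K g, (∀ b : g × Module.Dual K g, Spair a b = 0) → a = 0) ∧
    (∀ a b c : g × Module.Dual K g,
      Spair (sdBracket a b) c + Spair b (sdBracket a c) = 0) ∧
    (∀ a b : g × Module.Dual K g,
      Spair (Btilde lam B a) b + Spair a (Btilde lam B b) + lam * Spair a b = 0) := by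
  refine ⟨?_, ?_, ?_, ?_, ?_, ?_, ?_, ?_, ?_, ?_, ?_⟩
  · intro a b c
    simp only [sdBracket, coad, Prod.fst_add, Prod.snd_add, add_lie, Prod.mk_add_mk]
    refine Prod.ext rfl ?_
    ext z
    simp [LieAlgebra.ad_apply, add_lie]
    ring
  · intro t a b
    simp only [sdBracket, coad, Prod.smul_fst, Prod.smul_snd, smul_lie, Prod.smul_mk]
    refine Prod.ext rfl ?_
    ext z
    simp [LieAlgebra.ad_apply, smul_lie]
  · intro a b c
    simp only [sdBracket, coad, Prod.fst_add, Prod.snd_add, lie_add, Prod.mk_add_mk]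
    refine Prod.ext rfl ?_
    ext z
    simp [LieAlgebra.ad_apply]
    ring
  · intro t a b
    simp only [sdBracket, coad, Prod.smul_fst, Prod.smul_snd, lie_smul, Prod.smul_mk]
    refine Prod.ext rfl ?_
    ext z
    simp [LieAlgebra.ad_apply]
  · intro a
    simp [sdBracket, Prod.ext_iff]
  · intro a b c
    simp only [sdBracket, coad]
    refine Prod.ext (by simp [lie_lie]) ?_
    ext z
    simp [LieAlgebra.ad_apply, lie_lie]
    ring
  · intro a b
    obtain ⟨x, ξ⟩ := a; obtain ⟨y, η⟩ := b
    simp only [sdBracket, Btilde, coad, Prod.fst_add, Prod.snd_add, Prod.smul_fst,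
      Prod.smul_snd]
    refine Prod.ext ?_ ?_
    · simpa [map_add, map_smul] using hB x y
    · ext z
      have h1 := congrArg η (hB x z)
      have h2 := congrArg ξ (hB y z)
      simp only [map_add, map_smul, smul_eq_mul] at h1 h2
      simp [LieAlgebra.ad_apply, map_add, map_smul, mul_add, smul_eq_mul]
      linear_combination h2 - h1
  · intro a b
    simp [Spair, add_comm]
  · intro a hab
    obtain ⟨x, ξ⟩ := a
    have hx : x = 0 := by
      rw [← Module.forall_dual_apply_eq_zero_iff K]
      intro f
      simpa [Spair] using hab (0, f)
    have hξ : ξ = 0 := by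
      ext y
      simpa [Spair] using hab (y, 0)
    simp [hx, hξ, Prod.ext_iff]
  · intro a b c
    simp [Spair, sdBracket, coad, LieAlgebra.ad_apply]
    have h : (⁅c.1, b.1⁆ : g) = -⁅b.1, c.1⁆ := (lie_skew c.1 b.1).symm
    rw [h, map_neg]
    ring
  · intro a b
    simp [Spair, Btilde, smul_eq_mul]
    ring
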